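/- Fix an initial state x ∈ ℝ^n, an input bound ε₀ ≥ 0, and a horizon N. Then the resilience metric under the linear closed-loop controller satisfies: sup{ μ ≥ 0 : there exist α₁ ∈ ℝ^{m×n}, α₂ ∈ ℝ^m such that for every disturbance sequence d(0), …, d(N−1) with ‖d(i)‖∞ ≤ μ, the closed-loop trajectory x(0) = x, x(k+1) = A_k x(k) + B_k (α₁ x(k) + α₂) + d(k) satisfies G_k x(k) ≤ H_k for all k = 0, …, N and ‖α₁ x(k) + α₂‖∞ ≤ ε₀ for all k = 0, …, N−1 } = sup{ μ ≥ 0 : there exist α₁ ∈ ℝ^{m×n}, α₂ ∈ ℝ^m and a nonnegative matrix P ∈ ℝ^{((N+1)q + 2mN) × 2n(N+1)} with P A_b = μ E^{cl}(α₁) and P B_b ≤ F^{cl}(x, α₁, α₂, ε₀) }. -/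

import Mathlib

open Matrix Finset

noncomputable section

/-- Ordered product `M (k-1) * M (k-2) * ⋯ * M i` (empty product = identity when `k ≤ i`). -/
def mprod {n : ℕ} (M : ℕ → Matrix (Fin n) (Fin n) ℝ) (i k : ℕ) :
    Matrix (Fin n) (Fin n) ℝ :=
  (((List.range' i (k - i)).reverse).map M).prod

def Abar {n m : ℕ} (A : ℕ → Matrix (Fin n) (Fin n) ℝ) (B : ℕ → Matrix (Fin n) (Fin m) ℝ)
    (α₁ : Matrix (Fin m) (Fin n) ℝ) (j : ℕ) : Matrix (Fin n) (Fin n) ℝ :=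
  A j + B j * α₁

def trajCL {n m : ℕ} (A : ℕ → Matrix (Fin n) (Fin n) ℝ) (B : ℕ → Matrix (Fin n) (Fin m) ℝ)
    (α₁ : Matrix (Fin m) (Fin n) ℝ) (α₂ : Fin m → ℝ) (d : ℕ → Fin n → ℝ)
    (x0 : Fin n → ℝ) : ℕ → Fin n → ℝ
  | 0 => x0
  | k + 1 =>
      (A k).mulVec (trajCL A B α₁ α₂ d x0 k)
        + (B k).mulVec (α₁.mulVec (trajCL A B α₁ α₂ d x0 k) + α₂) + d k

def Eblk {n : ℕ} (N : ℕ) (M : ℕ → Matrix (Fin n) (Fin n) ℝ) (k : ℕ) :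
    Matrix (Fin n) (Fin (N + 1) × Fin n) ℝ :=
  Matrix.of fun r jc =>
    if 1 ≤ (jc.1 : ℕ) ∧ (jc.1 : ℕ) ≤ k then mprod M (jc.1 : ℕ) k r jc.2 else 0

def Fblk {n m : ℕ} (A : ℕ → Matrix (Fin n) (Fin n) ℝ) (B : ℕ → Matrix (Fin n) (Fin m) ℝ)
    (α₁ : Matrix (Fin m) (Fin n) ℝ) (α₂ : Fin m → ℝ) (x : Fin n → ℝ) (k : ℕ) : Fin n → ℝ :=
  (mprod (Abar A B α₁) 0 k).mulVec x
    + ∑ i ∈ Finset.range k, (mprod (Abar A B α₁) (i + 1) k * B i).mulVec α₂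

def Ex {n m q : ℕ} (N : ℕ) (A : ℕ → Matrix (Fin n) (Fin n) ℝ)
    (B : ℕ → Matrix (Fin n) (Fin m) ℝ) (G : ℕ → Matrix (Fin q) (Fin n) ℝ)
    (α₁ : Matrix (Fin m) (Fin n) ℝ) :
    Matrix (Fin (N + 1) × Fin q) (Fin (N + 1) × Fin n) ℝ :=
  Matrix.of fun kr jc => (G (kr.1 : ℕ) * Eblk N (Abar A B α₁) (kr.1 : ℕ)) kr.2 jc

def Fx {n m q : ℕ} (N : ℕ) (A : ℕ → Matrix (Fin n) (Fin n) ℝ)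
    (B : ℕ → Matrix (Fin n) (Fin m) ℝ) (G : ℕ → Matrix (Fin q) (Fin n) ℝ)
    (H : ℕ → Fin q → ℝ) (α₁ : Matrix (Fin m) (Fin n) ℝ) (α₂ : Fin m → ℝ)
    (x : Fin n → ℝ) : Fin (N + 1) × Fin q → ℝ :=
  fun kr => H (kr.1 : ℕ) kr.2 - (G (kr.1 : ℕ)).mulVec (Fblk A B α₁ α₂ x (kr.1 : ℕ)) kr.2

def Au (m : ℕ) : Matrix (Fin m ⊕ Fin m) (Fin m) ℝ := Matrix.fromRows 1 (-1)

def Sk {n m : ℕ} (A : ℕ → Matrix (Fin n) (Fin n) ℝ) (B : ℕ → Matrix (Fin n) (Fin m) ℝ)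
    (α₁ : Matrix (Fin m) (Fin n) ℝ) (α₂ : Fin m → ℝ) (x : Fin n → ℝ) (k : ℕ) : Fin m → ℝ :=
  α₁.mulVec (Fblk A B α₁ α₂ x k) + α₂

def Ecl {n m q : ℕ} (N : ℕ) (A : ℕ → Matrix (Fin n) (Fin n) ℝ)
    (B : ℕ → Matrix (Fin n) (Fin m) ℝ) (G : ℕ → Matrix (Fin q) (Fin n) ℝ)
    (α₁ : Matrix (Fin m) (Fin n) ℝ) :
    Matrix ((Fin (N + 1) × Fin q) ⊕ (Fin N × (Fin m ⊕ Fin m))) (Fin (N + 1) × Fin n) ℝ :=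
  Matrix.fromRows (Ex N A B G α₁)
    (Matrix.of fun kr jc => (Au m * α₁ * Eblk N (Abar A B α₁) (kr.1 : ℕ)) kr.2 jc)

def Fcl {n m q : ℕ} (N : ℕ) (A : ℕ → Matrix (Fin n) (Fin n) ℝ)
    (B : ℕ → Matrix (Fin n) (Fin m) ℝ) (G : ℕ → Matrix (Fin q) (Fin n) ℝ)
    (H : ℕ → Fin q → ℝ) (α₁ : Matrix (Fin m) (Fin n) ℝ) (α₂ : Fin m → ℝ)
    (x : Fin n → ℝ) (ε : ℝ) : (Fin (N + 1) × Fin q) ⊕ (Fin N × (Fin m ⊕ Fin m)) → ℝ :=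
  Sum.elim (Fx N A B G H α₁ α₂ x)
    (fun kr => ε - (Au m).mulVec (Sk A B α₁ α₂ x (kr.1 : ℕ)) kr.2)

def AbM (N n : ℕ) :
    Matrix ((Fin (N + 1) × Fin n) ⊕ (Fin (N + 1) × Fin n)) (Fin (N + 1) × Fin n) ℝ :=
  Matrix.fromRows 1 (-1)

def BbV (N n : ℕ) : (Fin (N + 1) × Fin n) ⊕ (Fin (N + 1) × Fin n) → ℝ := fun _ => 1

def trajOL {n m : ℕ} (A : ℕ → Matrix (Fin n) (Fin n) ℝ) (B : ℕ → Matrix (Fin n) (Fin m) ℝ)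
    (u : ℕ → Fin m → ℝ) (d : ℕ → Fin n → ℝ) (x0 : Fin n → ℝ) : ℕ → Fin n → ℝ
  | 0 => x0
  | k + 1 => (A k).mulVec (trajOL A B u d x0 k) + (B k).mulVec (u k) + d k

def Eol {n q : ℕ} (N : ℕ) (A : ℕ → Matrix (Fin n) (Fin n) ℝ)
    (G : ℕ → Matrix (Fin q) (Fin n) ℝ) :
    Matrix (Fin (N + 1) × Fin q) (Fin (N + 1) × Fin n) ℝ :=
  Matrix.of fun kr jc => (G (kr.1 : ℕ) * Eblk N A (kr.1 : ℕ)) kr.2 jc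

def Fol {n m q : ℕ} (N : ℕ) (A : ℕ → Matrix (Fin n) (Fin n) ℝ)
    (B : ℕ → Matrix (Fin n) (Fin m) ℝ) (G : ℕ → Matrix (Fin q) (Fin n) ℝ)
    (H : ℕ → Fin q → ℝ) (x : Fin n → ℝ) (ut : ℕ → Fin m → ℝ) (ε : ℝ) :
    Fin (N + 1) × Fin q → ℝ :=
  fun kr => H (kr.1 : ℕ) kr.2
    - (G (kr.1 : ℕ)).mulVec ((mprod A 0 (kr.1 : ℕ)).mulVec x) kr.2
    - ε * (G (kr.1 : ℕ)).mulVec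
        (∑ i ∈ Finset.range (kr.1 : ℕ), (mprod A (i + 1) (kr.1 : ℕ) * B i).mulVec (ut i)) kr.2

lemma mprod_of_le {n : ℕ} (M : ℕ → Matrix (Fin n) (Fin n) ℝ) {i k : ℕ} (h : k ≤ i) :
    mprod M i k = 1 := by
  simp [mprod, Nat.sub_eq_zero_of_le h]

lemma mprod_succ {n : ℕ} (M : ℕ → Matrix (Fin n) (Fin n) ℝ) {i k : ℕ} (h : i ≤ k) :
    mprod M i (k + 1) = M k * mprod M i k := by
  have h1 : k + 1 - i = (k - i) + 1 := by omega
  have h2 : i + 1 * (k - i) = k := by omega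
  rw [mprod, h1, List.range'_concat, h2]
  simp [mprod]

lemma mulVec_sum' {a b : ℕ} {ι : Type*} (s : Finset ι) (A : Matrix (Fin a) (Fin b) ℝ)
    (f : ι → Fin b → ℝ) : A.mulVec (∑ i ∈ s, f i) = ∑ i ∈ s, A.mulVec (f i) :=
  map_sum A.mulVecLin f s

lemma traj_eq {n m : ℕ} (A : ℕ → Matrix (Fin n) (Fin n) ℝ) (B : ℕ → Matrix (Fin n) (Fin m) ℝ)
    (α₁ : Matrix (Fin m) (Fin n) ℝ) (α₂ : Fin m → ℝ) (d : ℕ → Fin n → ℝ) (x : Fin n → ℝ)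
    (k : ℕ) :
    trajCL A B α₁ α₂ d x k =
      Fblk A B α₁ α₂ x k
        + ∑ i ∈ Finset.range k, (mprod (Abar A B α₁) (i + 1) k).mulVec (d i) := by
  induction k with
  | zero => simp [trajCL, Fblk, mprod_of_le]
  | succ k ih =>
      have hA : ∀ v : Fin n → ℝ,
          (A k).mulVec v + (B k).mulVec (α₁.mulVec v + α₂)
            = (Abar A B α₁ k).mulVec v + (B k).mulVec α₂ := by
        intro v
        simp [Abar, Matrix.add_mulVec, Matrix.mulVec_add, Matrix.mulVec_mulVec]
        abel
      show (A k).mulVec (trajCL A B α₁ α₂ d x k)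
          + (B k).mulVec (α₁.mulVec (trajCL A B α₁ α₂ d x k) + α₂) + d k = _
      rw [hA, ih]
      set Ab := Abar A B α₁ with hAb
      have s1 : ∑ i ∈ Finset.range k, (mprod Ab (i+1) (k+1) * B i).mulVec α₂
          = ∑ i ∈ Finset.range k, (Ab k).mulVec ((mprod Ab (i+1) k * B i).mulVec α₂) :=
        Finset.sum_congr rfl (fun i hi => by
          rw [mprod_succ _ (by simpa using Finset.mem_range.mp hi), Matrix.mul_assoc,
            ← Matrix.mulVec_mulVec])
      have s2 : ∑ i ∈ Finset.range k, (mprod Ab (i+1) (k+1)).mulVec (d i)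
          = ∑ i ∈ Finset.range k, (Ab k).mulVec ((mprod Ab (i+1) k).mulVec (d i)) :=
        Finset.sum_congr rfl (fun i hi => by
          rw [mprod_succ _ (by simpa using Finset.mem_range.mp hi), ← Matrix.mulVec_mulVec])
      simp only [Fblk, ← hAb]
      rw [Finset.sum_range_succ, Finset.sum_range_succ, s1, s2,
        mprod_succ _ (Nat.zero_le k), mprod_of_le _ (le_refl (k+1))]
      rw [Matrix.mulVec_add, Matrix.mulVec_add, mulVec_sum', mulVec_sum',
        Matrix.mulVec_mulVec]
      simp only [Matrix.one_mul, Matrix.one_mulVec]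
      abel

def pad {N n : ℕ} (v : Fin (N + 1) × Fin n → ℝ) (i : ℕ) : Fin n → ℝ :=
  fun c => v (⟨(i + 1) % (N + 1), Nat.mod_lt _ (Nat.succ_pos N)⟩, c)

lemma eblk_mulVec {n N : ℕ} (M : ℕ → Matrix (Fin n) (Fin n) ℝ) {k : ℕ} (hk : k ≤ N)
    (v : Fin (N + 1) × Fin n → ℝ) :
    (Eblk N M k).mulVec v = ∑ i ∈ Finset.range k, (mprod M (i + 1) k).mulVec (pad v i) := by
  funext r
  have lhs : (Eblk N M k).mulVec v r
      = ∑ j ∈ Finset.range (N + 1), ∑ c : Fin n,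
          (if 1 ≤ j ∧ j ≤ k then mprod M j k r c else 0)
            * v (⟨j % (N + 1), Nat.mod_lt _ (Nat.succ_pos N)⟩, c) := by
    rw [Matrix.mulVec, dotProduct, Fintype.sum_prod_type,
      ← Fin.sum_univ_eq_sum_range (fun j => ∑ c : Fin n,
          (if 1 ≤ j ∧ j ≤ k then mprod M j k r c else 0)
            * v (⟨j % (N + 1), Nat.mod_lt _ (Nat.succ_pos N)⟩, c)) (N + 1)]
    refine Finset.sum_congr rfl fun j _ => Finset.sum_congr rfl fun c _ => ?_
    have : (⟨(j : ℕ) % (N + 1), Nat.mod_lt _ (Nat.succ_pos N)⟩ : Fin (N + 1)) = j := by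
      ext; simp [Nat.mod_eq_of_lt j.isLt]
    rw [this]
    rfl
  rw [lhs]
  rw [← Finset.sum_subset (Finset.range_subset_range.mpr (by omega : k + 1 ≤ N + 1))
    (fun j _ hj => by
      have : ¬ (1 ≤ j ∧ j ≤ k) := by simp at hj; omega
      simp [this])]
  rw [Finset.sum_range_succ']
  have h0 : ¬(1 ≤ 0 ∧ 0 ≤ k) := by omega
  simp only [h0, if_false, zero_mul, Finset.sum_const_zero, add_zero, Finset.sum_apply]
  refine Finset.sum_congr rfl fun i hi => ?_
  have hc : 1 ≤ i + 1 ∧ i + 1 ≤ k := ⟨Nat.le_add_left 1 i, Finset.mem_range.mp hi⟩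
  rw [Matrix.mulVec, dotProduct]
  exact Finset.sum_congr rfl fun c _ => by rw [if_pos hc]; rfl

lemma box_dual {ι : Type*} [Fintype ι] (w : ι → ℝ) (c μ : ℝ) (hμ : 0 ≤ μ) :
    (∀ v : ι → ℝ, (∀ p, |v p| ≤ μ) → ∑ p, w p * v p ≤ c) ↔ ∑ p, |μ * w p| ≤ c := by
  constructor
  · intro h
    have := h (fun p => if 0 ≤ w p then μ else -μ) (fun p => by
      by_cases hp : 0 ≤ w p <;> simp [hp, abs_of_nonneg hμ, abs_neg])
    calc ∑ p, |μ * w p| = ∑ p, w p * (if 0 ≤ w p then μ else -μ) := by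
          refine Finset.sum_congr rfl fun p _ => ?_
          by_cases hp : 0 ≤ w p
          · rw [if_pos hp, abs_mul, abs_of_nonneg hμ, abs_of_nonneg hp, mul_comm]
          · rw [if_neg hp, abs_mul, abs_of_nonneg hμ,
              abs_of_neg (lt_of_not_ge hp)]; ring
      _ ≤ c := this
  · intro h v hv
    calc ∑ p, w p * v p ≤ ∑ p, |w p * v p| :=
          Finset.sum_le_sum fun p _ => le_abs_self _
      _ ≤ ∑ p, |μ * w p| := Finset.sum_le_sum fun p _ => by
          rw [abs_mul, abs_mul, abs_of_nonneg hμ, mul_comm]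
          exact mul_le_mul_of_nonneg_right (hv p) (abs_nonneg _)
      _ ≤ c := h

lemma max_add_max_neg (a : ℝ) : max a 0 + max (-a) 0 = |a| := by
  rcases le_or_gt 0 a with h | h
  · rw [max_eq_left h, max_eq_right (by linarith), abs_of_nonneg h, add_zero]
  · rw [max_eq_right h.le, max_eq_left (by linarith), abs_of_neg h, zero_add]

lemma max_sub_max_neg (a : ℝ) : max a 0 - max (-a) 0 = a := by
  rcases le_or_gt 0 a with h | h
  · rw [max_eq_left h, max_eq_right (by linarith), sub_zero]
  · rw [max_eq_right h.le, max_eq_left (by linarith), zero_sub, neg_neg]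

lemma cert_iff {r c : Type*} [Fintype r] [Fintype c] [DecidableEq c]
    (Mt : Matrix r c ℝ) (f : r → ℝ) (μ : ℝ) :
    (∃ P : Matrix r (c ⊕ c) ℝ, (∀ i j, 0 ≤ P i j) ∧
        P * Matrix.fromRows (1 : Matrix c c ℝ) (-1) = μ • Mt ∧
        P.mulVec (fun _ => (1 : ℝ)) ≤ f) ↔
    (∀ i, ∑ j, |μ * Mt i j| ≤ f i) := by
  have habm : ∀ (P : Matrix r (c ⊕ c) ℝ) i j,
      (P * Matrix.fromRows (1 : Matrix c c ℝ) (-1) : Matrix r c ℝ) i j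
        = P i (Sum.inl j) - P i (Sum.inr j) := by
    intro P i j
    change ∑ k, P i k * Matrix.fromRows (1 : Matrix c c ℝ) (-1) k j = _
    rw [Fintype.sum_sum_type]
    simp [Matrix.fromRows_apply_inl, Matrix.fromRows_apply_inr, Matrix.one_apply, mul_ite, Finset.sum_ite_eq', sub_eq_add_neg]
  have hmv : ∀ (P : Matrix r (c ⊕ c) ℝ) i,
      P.mulVec (fun _ => (1 : ℝ)) i = ∑ j, P i (Sum.inl j) + ∑ j, P i (Sum.inr j) := by
    intro P i
    rw [Matrix.mulVec, dotProduct, Fintype.sum_sum_type]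
    simp
  constructor
  · rintro ⟨P, hP, hEq, hLe⟩ i
    have h1 : ∀ j, μ * Mt i j = P i (Sum.inl j) - P i (Sum.inr j) := fun j => by
      have := congrFun (congrFun hEq i) j
      rw [habm] at this
      rw [this]; simp
    calc ∑ j, |μ * Mt i j| ≤ ∑ j, (P i (Sum.inl j) + P i (Sum.inr j)) := by
          refine Finset.sum_le_sum fun j _ => ?_
          rw [h1 j]
          calc |P i (Sum.inl j) - P i (Sum.inr j)| ≤ |P i (Sum.inl j)| + |P i (Sum.inr j)| :=
                abs_sub _ _
            _ = _ := by rw [abs_of_nonneg (hP _ _), abs_of_nonneg (hP _ _)]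
      _ = P.mulVec (fun _ => (1:ℝ)) i := by rw [hmv, Finset.sum_add_distrib]
      _ ≤ f i := hLe i
  · intro h
    refine ⟨Matrix.of fun i s => Sum.elim (fun j => max (μ * Mt i j) 0)
      (fun j => max (-(μ * Mt i j)) 0) s, fun i s => ?_, ?_, fun i => ?_⟩
    · cases s <;> exact le_max_right _ _
    · ext i j
      rw [habm]
      simp [max_sub_max_neg]
    · rw [hmv]
      simp only [Matrix.of_apply, Sum.elim_inl, Sum.elim_inr]
      calc (∑ j, max (μ * Mt i j) 0) + ∑ j, max (-(μ * Mt i j)) 0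
          = ∑ j, |μ * Mt i j| := by
            rw [← Finset.sum_add_distrib]
            exact Finset.sum_congr rfl fun j _ => max_add_max_neg _
        _ ≤ f i := h i


def vOf {N n : ℕ} (d : ℕ → Fin n → ℝ) : Fin (N + 1) × Fin n → ℝ :=
  fun p => if 1 ≤ (p.1 : ℕ) then d ((p.1 : ℕ) - 1) p.2 else 0

lemma pad_vOf {N n : ℕ} (d : ℕ → Fin n → ℝ) {i : ℕ} (hi : i < N) :
    pad (vOf (N := N) d) i = d i := by
  funext c
  have h1 : (i + 1) % (N + 1) = i + 1 :=
    Nat.mod_eq_of_lt (Nat.succ_lt_succ hi)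
  simp [pad, vOf, h1]

lemma traj_eq_v {n m N : ℕ} (A : ℕ → Matrix (Fin n) (Fin n) ℝ)
    (B : ℕ → Matrix (Fin n) (Fin m) ℝ) (α₁ : Matrix (Fin m) (Fin n) ℝ) (α₂ : Fin m → ℝ)
    (x : Fin n → ℝ) (v : Fin (N + 1) × Fin n → ℝ) {k : ℕ} (hk : k ≤ N) :
    trajCL A B α₁ α₂ (pad v) x k
      = Fblk A B α₁ α₂ x k + (Eblk N (Abar A B α₁) k).mulVec v := by
  rw [traj_eq, eblk_mulVec _ hk]

lemma traj_eq_vOf {n m N : ℕ} (A : ℕ → Matrix (Fin n) (Fin n) ℝ)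
    (B : ℕ → Matrix (Fin n) (Fin m) ℝ) (α₁ : Matrix (Fin m) (Fin n) ℝ) (α₂ : Fin m → ℝ)
    (x : Fin n → ℝ) (d : ℕ → Fin n → ℝ) {k : ℕ} (hk : k ≤ N) :
    trajCL A B α₁ α₂ d x k
      = Fblk A B α₁ α₂ x k + (Eblk N (Abar A B α₁) k).mulVec (vOf (N := N) d) := by
  rw [traj_eq, eblk_mulVec _ hk]
  congr 1
  exact Finset.sum_congr rfl fun i hi => by
    rw [pad_vOf d (by have := Finset.mem_range.mp hi; omega)]

lemma ecl_mulVec_inl {n m q N : ℕ} (A : ℕ → Matrix (Fin n) (Fin n) ℝ)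
    (B : ℕ → Matrix (Fin n) (Fin m) ℝ) (G : ℕ → Matrix (Fin q) (Fin n) ℝ)
    (α₁ : Matrix (Fin m) (Fin n) ℝ) (v : Fin (N + 1) × Fin n → ℝ)
    (kq : Fin (N + 1) × Fin q) :
    (Ecl N A B G α₁).mulVec v (Sum.inl kq)
      = (G (kq.1 : ℕ)).mulVec ((Eblk N (Abar A B α₁) (kq.1 : ℕ)).mulVec v) kq.2 := by
  rw [Ecl, Matrix.fromRows_mulVec, Matrix.mulVec_mulVec]
  rfl

lemma ecl_mulVec_inr {n m q N : ℕ} (A : ℕ → Matrix (Fin n) (Fin n) ℝ)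
    (B : ℕ → Matrix (Fin n) (Fin m) ℝ) (G : ℕ → Matrix (Fin q) (Fin n) ℝ)
    (α₁ : Matrix (Fin m) (Fin n) ℝ) (v : Fin (N + 1) × Fin n → ℝ)
    (ks : Fin N × (Fin m ⊕ Fin m)) :
    (Ecl N A B G α₁).mulVec v (Sum.inr ks)
      = (Au m).mulVec (α₁.mulVec ((Eblk N (Abar A B α₁) (ks.1 : ℕ)).mulVec v)) ks.2 := by
  rw [Ecl, Matrix.fromRows_mulVec, Matrix.mulVec_mulVec, Matrix.mulVec_mulVec]
  rfl

lemma au_mulVec {m : ℕ} (w : Fin m → ℝ) :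
    (Au m).mulVec w = Sum.elim w (-w) := by
  rw [Au, Matrix.fromRows_mulVec, Matrix.one_mulVec, Matrix.neg_mulVec, Matrix.one_mulVec]

lemma robust_iff_box {n m q N : ℕ} (A : ℕ → Matrix (Fin n) (Fin n) ℝ)
    (B : ℕ → Matrix (Fin n) (Fin m) ℝ) (G : ℕ → Matrix (Fin q) (Fin n) ℝ)
    (H : ℕ → Fin q → ℝ) (x : Fin n → ℝ) (ε₀ : ℝ) (hε₀ : 0 ≤ ε₀)
    (μ : ℝ) (hμ : 0 ≤ μ) (α₁ : Matrix (Fin m) (Fin n) ℝ) (α₂ : Fin m → ℝ) :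
    (∀ d : ℕ → Fin n → ℝ, (∀ i, i < N → ‖d i‖ ≤ μ) →
        (∀ k, k ≤ N → (G k).mulVec (trajCL A B α₁ α₂ d x k) ≤ H k) ∧
        (∀ k, k < N → ‖α₁.mulVec (trajCL A B α₁ α₂ d x k) + α₂‖ ≤ ε₀)) ↔
      (∀ v : Fin (N + 1) × Fin n → ℝ, (∀ p, |v p| ≤ μ) →
        (Ecl N A B G α₁).mulVec v ≤ Fcl N A B G H α₁ α₂ x ε₀) := by
  constructor
  · intro hrob v hv
    obtain ⟨hG, hu⟩ := hrob (pad v) (fun i _ =>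
      (pi_norm_le_iff_of_nonneg hμ).mpr fun c => by
        simpa [Real.norm_eq_abs, pad] using hv _)
    intro s
    rcases s with kq | ks
    · rw [ecl_mulVec_inl]
      have hk : (kq.1 : ℕ) ≤ N := by omega
      have hT := traj_eq_v A B α₁ α₂ x v hk
      have h1 := hG (kq.1 : ℕ) hk kq.2
      rw [hT, Matrix.mulVec_add, Pi.add_apply] at h1
      show _ ≤ Fx N A B G H α₁ α₂ x kq
      rw [Fx]
      linarith
    · rw [ecl_mulVec_inr]
      have hk : (ks.1 : ℕ) < N := ks.1.isLt
      have hT := traj_eq_v A B α₁ α₂ x v (le_of_lt hk)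
      have h2 := hu (ks.1 : ℕ) hk
      rw [hT] at h2
      show _ ≤ ε₀ - (Au m).mulVec (Sk A B α₁ α₂ x (ks.1 : ℕ)) ks.2
      have hw : α₁.mulVec ((Eblk N (Abar A B α₁) (ks.1 : ℕ)).mulVec v)
          = (α₁.mulVec (Fblk A B α₁ α₂ x (ks.1 : ℕ)
              + (Eblk N (Abar A B α₁) (ks.1 : ℕ)).mulVec v) + α₂)
            - Sk A B α₁ α₂ x (ks.1 : ℕ) := by
        rw [Sk, Matrix.mulVec_add]
        abel
      rw [hw, Matrix.mulVec_sub, Pi.sub_apply]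
      have hb : (Au m).mulVec (α₁.mulVec (Fblk A B α₁ α₂ x (ks.1 : ℕ)
          + (Eblk N (Abar A B α₁) (ks.1 : ℕ)).mulVec v) + α₂) ks.2 ≤ ε₀ := by
        rw [au_mulVec]
        rcases ks.2 with t | t
        · exact le_trans (le_abs_self _)
            (by simpa [Real.norm_eq_abs] using
              le_trans (norm_le_pi_norm _ t) h2)
        · simp only [Sum.elim_inr, Pi.neg_apply]
          exact le_trans (neg_le_abs _)
            (by simpa [Real.norm_eq_abs] using
              le_trans (norm_le_pi_norm _ t) h2)
      linarith
  · intro hbox d hd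
    have hv : ∀ p, |vOf (N := N) d p| ≤ μ := by
      intro p
      by_cases h1 : 1 ≤ (p.1 : ℕ)
      · have h2 : (p.1 : ℕ) - 1 < N := by
          have := p.1.isLt; omega
        have h3 : ‖d ((p.1 : ℕ) - 1) p.2‖ ≤ ‖d ((p.1 : ℕ) - 1)‖ := norm_le_pi_norm _ p.2
        rw [Real.norm_eq_abs] at h3
        simp only [vOf, if_pos h1]
        exact le_trans h3 (hd _ h2)
      · simp only [vOf, if_neg h1, abs_zero]
        exact hμ
    have hB := hbox _ hv
    constructor
    · intro k hk
      intro r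
      have h := hB (Sum.inl (⟨k, by omega⟩, r))
      rw [ecl_mulVec_inl] at h
      have hT := traj_eq_vOf A B α₁ α₂ x d hk
      show (G k).mulVec (trajCL A B α₁ α₂ d x k) r ≤ H k r
      rw [hT, Matrix.mulVec_add, Pi.add_apply]
      have : Fcl N A B G H α₁ α₂ x ε₀ (Sum.inl (⟨k, by omega⟩, r))
          = H k r - (G k).mulVec (Fblk A B α₁ α₂ x k) r := rfl
      rw [this] at h
      simp only at h
      linarith
    · intro k hk
      have hT := traj_eq_vOf A B α₁ α₂ x d (le_of_lt hk)
      rw [(pi_norm_le_iff_of_nonneg hε₀)]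
      intro t
      have hl := hB (Sum.inr (⟨k, hk⟩, Sum.inl t))
      have hr := hB (Sum.inr (⟨k, hk⟩, Sum.inr t))
      rw [ecl_mulVec_inr] at hl hr
      have hFl : Fcl N A B G H α₁ α₂ x ε₀ (Sum.inr (⟨k, hk⟩, Sum.inl t))
          = ε₀ - (Au m).mulVec (Sk A B α₁ α₂ x k) (Sum.inl t) := rfl
      have hFr : Fcl N A B G H α₁ α₂ x ε₀ (Sum.inr (⟨k, hk⟩, Sum.inr t))
          = ε₀ - (Au m).mulVec (Sk A B α₁ α₂ x k) (Sum.inr t) := rfl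
      rw [hFl] at hl
      rw [hFr] at hr
      simp only [au_mulVec, Sum.elim_inl, Sum.elim_inr, Pi.neg_apply] at hl hr
      have hw : α₁.mulVec (trajCL A B α₁ α₂ d x k) + α₂
          = α₁.mulVec ((Eblk N (Abar A B α₁) k).mulVec (vOf (N := N) d))
            + Sk A B α₁ α₂ x k := by
        rw [hT, Matrix.mulVec_add, Sk]
        abel
      rw [Real.norm_eq_abs, abs_le]
      constructor
      · have := hr
        rw [hw]
        simp only [Pi.add_apply]
        linarith
      · rw [hw]
        simp only [Pi.add_apply]
        linarith

lemma box_iff_C {n ρ : ℕ} {κ : Type*} [Fintype κ]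
    (Mt : Matrix κ (Fin (ρ + 1) × Fin n) ℝ) (f : κ → ℝ) (μ : ℝ) (hμ : 0 ≤ μ) :
    (∀ v : Fin (ρ + 1) × Fin n → ℝ, (∀ p, |v p| ≤ μ) → Mt.mulVec v ≤ f) ↔
      (∀ i, ∑ j, |μ * Mt i j| ≤ f i) := by
  constructor
  · intro h i
    exact (box_dual (fun j => Mt i j) (f i) μ hμ).mp fun v hv => h v hv i
  · intro h v hv i
    exact (box_dual (fun j => Mt i j) (f i) μ hμ).mpr (h i) v hv


/-- Resilience metric under the linear closed-loop controller, with input bound `ε₀`: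
the supremum of admissible disturbance bounds `μ` in the robust formulation equals the
supremum in the Farkas-certified formulation. -/
theorem resilience_closedLoop {n m q N : ℕ}
    (A : ℕ → Matrix (Fin n) (Fin n) ℝ) (B : ℕ → Matrix (Fin n) (Fin m) ℝ)
    (G : ℕ → Matrix (Fin q) (Fin n) ℝ) (H : ℕ → Fin q → ℝ)
    (x : Fin n → ℝ) (ε₀ : ℝ) (hε₀ : 0 ≤ ε₀) :
    sSup {μ : ℝ | 0 ≤ μ ∧ ∃ (α₁ : Matrix (Fin m) (Fin n) ℝ) (α₂ : Fin m → ℝ),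
        ∀ d : ℕ → Fin n → ℝ, (∀ i, i < N → ‖d i‖ ≤ μ) →
          (∀ k, k ≤ N → (G k).mulVec (trajCL A B α₁ α₂ d x k) ≤ H k) ∧
          (∀ k, k < N → ‖α₁.mulVec (trajCL A B α₁ α₂ d x k) + α₂‖ ≤ ε₀)} =
    sSup {μ : ℝ | 0 ≤ μ ∧ ∃ (α₁ : Matrix (Fin m) (Fin n) ℝ) (α₂ : Fin m → ℝ)
        (P : Matrix ((Fin (N + 1) × Fin q) ⊕ (Fin N × (Fin m ⊕ Fin m)))
          ((Fin (N + 1) × Fin n) ⊕ (Fin (N + 1) × Fin n)) ℝ),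
        (∀ i j, 0 ≤ P i j) ∧
        P * AbM N n = μ • Ecl N A B G α₁ ∧
        P.mulVec (BbV N n) ≤ Fcl N A B G H α₁ α₂ x ε₀} := by
  classical
  have key : ∀ (μ : ℝ), 0 ≤ μ → ∀ (α₁ : Matrix (Fin m) (Fin n) ℝ) (α₂ : Fin m → ℝ),
      ((∀ d : ℕ → Fin n → ℝ, (∀ i, i < N → ‖d i‖ ≤ μ) →
          (∀ k, k ≤ N → (G k).mulVec (trajCL A B α₁ α₂ d x k) ≤ H k) ∧
          (∀ k, k < N → ‖α₁.mulVec (trajCL A B α₁ α₂ d x k) + α₂‖ ≤ ε₀)) ↔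
        (∃ P : Matrix ((Fin (N + 1) × Fin q) ⊕ (Fin N × (Fin m ⊕ Fin m)))
            ((Fin (N + 1) × Fin n) ⊕ (Fin (N + 1) × Fin n)) ℝ,
          (∀ i j, 0 ≤ P i j) ∧
          P * AbM N n = μ • Ecl N A B G α₁ ∧
          P.mulVec (BbV N n) ≤ Fcl N A B G H α₁ α₂ x ε₀)) := by
    intro μ hμ α₁ α₂
    rw [robust_iff_box A B G H x ε₀ hε₀ μ hμ α₁ α₂, box_iff_C _ _ μ hμ]
    simp only [AbM, BbV]
    exact (cert_iff (Ecl N A B G α₁) (Fcl N A B G H α₁ α₂ x ε₀) μ).symm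
  congr 1
  ext μ
  simp only [Set.mem_setOf_eq]
  constructor
  · rintro ⟨hμ, α₁, α₂, h⟩
    exact ⟨hμ, α₁, α₂, (key μ hμ α₁ α₂).mp h⟩
  · rintro ⟨hμ, α₁, α₂, P, h⟩
    exact ⟨hμ, α₁, α₂, (key μ hμ α₁ α₂).mpr ⟨P, h⟩⟩
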